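/- If M is a Σ-injective left R-module, then the union of any chain of direct summands of M^(ℵ₀) (the countable direct sum of copies of M) is a direct summand of M^(ℵ₀). -/

import Mathlib

open DirectSum

/-- An injective module `M` is `Σ`-injective if every direct sum of copies of `M`
is injective. -/
def SigmaInjective (R : Type u) [Ring R] (M : Type v) [AddCommGroup M] [Module R M] : Prop :=
  ∀ ι : Type v, Module.Injective R (⨁ _ : ι, M)

section Aux

universe u v

variable {R : Type u} [Ring R]


/-- Injectivity transfers along a linear equivalence. -/
lemma ModInj.of_equiv {A B : Type v} [AddCommGroup A] [Module R A] [AddCommGroup B] [Module R B]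
    (e : A ≃ₗ[R] B) (hA : Module.Injective R A) : Module.Injective R B where
  out X Y _ _ _ _ f hf g := by
    obtain ⟨h, hh⟩ := hA.out f hf (e.symm.toLinearMap ∘ₗ g)
    exact ⟨e.toLinearMap ∘ₗ h, fun x => by simp [hh x]⟩

/-- A direct summand of an injective module is injective. -/
lemma ModInj.of_isCompl {Q : Type v} [AddCommGroup Q] [Module R Q] (hQ : Module.Injective R Q)
    {N P : Submodule R Q} (hNP : IsCompl N P) : Module.Injective R ↥N where
  out X Y _ _ _ _ f hf g := by
    obtain ⟨h, hh⟩ := hQ.out f hf (N.subtype ∘ₗ g)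
    refine ⟨(N.projectionOnto P hNP) ∘ₗ h, fun x => ?_⟩
    simp [hh x]

variable {M : Type v} [AddCommGroup M] [Module R M]

lemma injQ (hM : ∀ ι : Type v, Module.Injective R (⨁ _ : ι, M)) :
    Module.Injective R (⨁ _ : ℕ, M) :=
  ModInj.of_equiv (lequivCongrLeft R (Equiv.ulift : ULift.{v} ℕ ≃ ℕ)) (hM (ULift.{v} ℕ))

lemma injQQ (hM : ∀ ι : Type v, Module.Injective R (⨁ _ : ι, M)) :
    Module.Injective R (⨁ _ : ℕ, (⨁ _ : ℕ, M)) := by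
  refine ModInj.of_equiv (?_ : (⨁ _ : ULift.{v} (Σ _ : ℕ, ℕ), M) ≃ₗ[R] _) (hM _)
  exact (lequivCongrLeft R (Equiv.ulift : ULift.{v} (Σ _ : ℕ, ℕ) ≃ _)).trans
    (sigmaLcurryEquiv (R := R) (δ := fun _ _ => M))

variable {Q : Type v} [AddCommGroup Q] [Module R Q]

lemma key_lemma (hQQ : Module.Injective R (⨁ _ : ℕ, Q))
    (C : Set (Submodule R Q)) (hC : IsChain (· ≤ ·) C) (hne : C.Nonempty)
    (hsummand : ∀ N ∈ C, ∃ P, IsCompl N P)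
    (y : Q) (D : Submodule R Q) (hD : D ≤ R ∙ y)
    (g : ↥D →ₗ[R] Q) (hg : ∀ x, g x ∈ sSup C) :
    ∃ N ∈ C, ∀ x, g x ∈ N := by
  by_contra hcon
  push_neg at hcon
  have step : ∀ N : {N : Submodule R Q // N ∈ C},
      ∃ N' : {N : Submodule R Q // N ∈ C}, N.1 ≤ N'.1 ∧ ∃ x : ↥D, g x ∈ N'.1 ∧ g x ∉ N.1 := by
    rintro ⟨N, hN⟩
    obtain ⟨x, hx⟩ := hcon N hN
    obtain ⟨N', hN', hxN'⟩ := (Submodule.mem_sSup_of_directed hne hC.directedOn).1 (hg x)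
    rcases eq_or_ne N N' with rfl | hne'
    · exact absurd hxN' hx
    rcases hC hN hN' hne' with h | h
    · exact ⟨⟨N', hN'⟩, h, x, hxN', hx⟩
    · exact absurd (h hxN') hx
  choose step hstep₁ hstep₂ using step
  obtain ⟨N₀, hN₀⟩ := hne
  obtain ⟨T, hTsucc⟩ : ∃ T : ℕ → {N : Submodule R Q // N ∈ C}, ∀ n, T (n + 1) = step (T n) :=
    ⟨fun n => Nat.rec ⟨N₀, hN₀⟩ (fun _ N => step N) n, fun _ => rfl⟩
  have hTmono : Monotone fun n => (T n).1 :=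
    monotone_nat_of_le_succ fun n => by rw [hTsucc]; exact hstep₁ (T n)
  have key : ∀ n, ∃ x : ↥D, g x ∈ (T (n + 1)).1 ∧ g x ∉ (T n).1 := fun n => by
    rw [hTsucc]; exact hstep₂ (T n)
  choose a ha₁ ha₂ using key
  choose P hP using fun n => hsummand (T n).1 (T n).2
  set ρ : ℕ → Q →ₗ[R] Q :=
    fun n => (T n).1.subtype ∘ₗ (T n).1.projectionOnto (P n) (hP n) with hρ
  have hρ_mem : ∀ n x, ρ n x ∈ (T n).1 := fun n x => ((T n).1.projectionOnto (P n) (hP n) x).2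
  have hρ_id : ∀ n x, x ∈ (T n).1 → ρ n x = x := by
    intro n x hx
    show ((T n).1.projectionOnto (P n) (hP n) x : Q) = x
    rw [show x = ((⟨x, hx⟩ : (T n).1) : Q) from rfl,
      Submodule.projectionOnto_apply_left (hP n)]
  set c : ℕ → Q →ₗ[R] Q := fun n => ρ (n + 1) - ρ n with hc
  have hc_apply : ∀ n x, c n x = ρ (n + 1) x - ρ n x := fun n x => rfl
  have hc0 : ∀ {m n : ℕ}, m ≤ n → ∀ x ∈ (T m).1, c n x = 0 := by
    intro m n hmn x hx
    have hx1 : x ∈ (T n).1 := hTmono hmn hx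
    have hx2 : x ∈ (T (n + 1)).1 := hTmono (Nat.le_succ n) hx1
    rw [hc_apply, hρ_id n x hx1, hρ_id (n + 1) x hx2, sub_self]
  have hcne : ∀ n, c n (g (a n)) ≠ 0 := by
    intro n h
    rw [hc_apply, hρ_id (n + 1) _ (ha₁ n), sub_eq_zero] at h
    exact ha₂ n (h ▸ hρ_mem n (g (a n)))
  classical
  -- the submodule of elements whose image lies in some `T n`
  set J : Submodule R ↥D :=
    { carrier := {x : ↥D | ∃ n, g x ∈ (T n).1}
      add_mem' := by
        rintro x y ⟨m, hm⟩ ⟨m', hm'⟩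
        exact ⟨max m m', by
          rw [map_add]
          exact Submodule.add_mem _ (hTmono (le_max_left m m') hm)
            (hTmono (le_max_right m m') hm')⟩
      zero_mem' := ⟨0, by simp⟩
      smul_mem' := by
        rintro r x ⟨m, hm⟩
        exact ⟨m, by rw [map_smul]; exact Submodule.smul_mem _ r hm⟩ } with hJdef
  have hJ_mem : ∀ x : ↥J, ∃ n, g x.1 ∈ (T n).1 := fun x => x.2
  -- the partial sums
  set S : ℕ → (↥D →ₗ[R] ⨁ _ : ℕ, Q) :=
    fun m => ∑ n ∈ Finset.range m, lof R ℕ (fun _ => Q) n ∘ₗ c n ∘ₗ g with hSdef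
  have hS_comp : ∀ (m : ℕ) (x : ↥D) (k : ℕ),
      (S m x) k = if k < m then c k (g x) else 0 := by
    intro m x k
    rw [hSdef]
    simp only [LinearMap.coe_sum, Finset.sum_apply, LinearMap.comp_apply]
    rw [DFinsupp.finset_sum_apply]
    by_cases hk : k < m
    · rw [Finset.sum_eq_single_of_mem k (Finset.mem_range.2 hk)]
      · rw [if_pos hk, lof_eq_of, of_eq_same]
      · intro n _ hn
        rw [lof_eq_of, of_eq_of_ne _ _ _ hn.symm]
    · rw [if_neg hk, Finset.sum_eq_zero]
      intro n hn
      have : n ≠ k := fun h => hk (h ▸ Finset.mem_range.1 hn)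
      rw [lof_eq_of, of_eq_of_ne _ _ _ this.symm]
  have hS_eq : ∀ (x : ↥D) {m m'}, g x ∈ (T m).1 → g x ∈ (T m').1 → S m x = S m' x := by
    intro x m m' hm hm'
    refine DFinsupp.ext fun k => ?_
    rw [hS_comp, hS_comp]
    split_ifs with h1 h2 h2
    · rfl
    · exact hc0 (not_lt.1 h2) _ hm'
    · exact (hc0 (not_lt.1 h1) _ hm).symm
    · rfl
  -- the glued map
  set m0 : ↥J → ℕ := fun x => (hJ_mem x).choose with hm0def
  have hm0 : ∀ x : ↥J, g x.1 ∈ (T (m0 x)).1 := fun x => (hJ_mem x).choose_spec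
  set φ : ↥J →ₗ[R] ⨁ _ : ℕ, Q :=
    { toFun := fun x => S (m0 x) x.1
      map_add' := by
        intro x y
        have hM : g ((x + y).1) ∈ (T (max (m0 x) (m0 y))).1 := by
          rw [show (x + y).1 = x.1 + y.1 from rfl, map_add]
          exact Submodule.add_mem _ (hTmono (le_max_left _ _) (hm0 x))
            (hTmono (le_max_right _ _) (hm0 y))
        calc S (m0 (x + y)) (x + y).1 = S (max (m0 x) (m0 y)) ((x + y).1) :=
              hS_eq _ (hm0 (x + y)) hM
          _ = S (max (m0 x) (m0 y)) x.1 + S (max (m0 x) (m0 y)) y.1 := map_add _ _ _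
          _ = S (m0 x) x.1 + S (m0 y) y.1 := by
              rw [hS_eq x.1 (hTmono (le_max_left _ _) (hm0 x)) (hm0 x),
                hS_eq y.1 (hTmono (le_max_right _ _) (hm0 y)) (hm0 y)]
      map_smul' := by
        intro r x
        have hmem : g ((r • x).1) ∈ (T (m0 x)).1 := by
          rw [show (r • x).1 = r • x.1 from rfl, map_smul]
          exact Submodule.smul_mem _ r (hm0 x)
        simp only [RingHom.id_apply]
        rw [hS_eq _ (hm0 (r • x)) hmem, show (r • x).1 = r • x.1 from rfl, map_smul] } with hφdef
  have hφ_comp : ∀ (x : ↥J) (k : ℕ), (φ x) k = c k (g x.1) := by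
    intro x k
    show (S (m0 x) x.1) k = c k (g x.1)
    rw [hS_comp]
    split_ifs with h
    · rfl
    · exact (hc0 (not_lt.1 h) _ (hm0 x)).symm
  -- extend φ along the inclusion J ↪ R ∙ y
  have hyy : y ∈ R ∙ y := Submodule.mem_span_singleton_self y
  set incl : ↥J →ₗ[R] ↥(R ∙ y) := Submodule.inclusion hD ∘ₗ J.subtype with hincldef
  have hincl_inj : Function.Injective incl :=
    (Submodule.inclusion_injective hD).comp (Submodule.injective_subtype J)
  obtain ⟨Φ, hΦ⟩ := hQQ.out incl hincl_inj φ
  set w : ⨁ _ : ℕ, Q := Φ ⟨y, hyy⟩ with hwdef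
  set m₀ : ℕ := (DFinsupp.support w).sup id + 1 with hm₀def
  have hw0 : ∀ n, m₀ ≤ n → w n = 0 := by
    intro n hn
    by_contra h
    have := Finset.le_sup (f := id) (DFinsupp.mem_support_iff.2 h)
    simp only [id] at this
    omega
  -- every element of J is of the form r • y, so φ x = r • w
  have hφw : ∀ x : ↥J, ∃ r : R, φ x = r • w := by
    intro x
    obtain ⟨r, hr⟩ := Submodule.mem_span_singleton.1 (hD x.1.2)
    refine ⟨r, ?_⟩
    have : incl x = r • (⟨y, hyy⟩ : ↥(R ∙ y)) := by
      apply Subtype.ext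
      exact hr.symm
    rw [← hΦ x, this, map_smul]
  -- contradiction at index m₀
  obtain ⟨r, hr⟩ := hφw ⟨a m₀, ⟨m₀ + 1, ha₁ m₀⟩⟩
  apply hcne m₀
  have := congrArg (fun z : ⨁ _ : ℕ, Q => z m₀) hr
  simp only at this
  rw [hφ_comp] at this
  rw [this, DFinsupp.coe_smul, Pi.smul_apply, hw0 m₀ le_rfl, smul_zero]

lemma main_aux (hQ : Module.Injective R Q) (hQQ : Module.Injective R (⨁ _ : ℕ, Q))
    (C : Set (Submodule R Q)) (hC : IsChain (· ≤ ·) C) (hne : C.Nonempty)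
    (hsummand : ∀ N ∈ C, ∃ P, IsCompl N P) :
    ∃ P, IsCompl (sSup C) P := by
  classical
  set E : Set (Q →ₗ.[R] Q) :=
    {h | sSup C ≤ h.domain ∧ ∀ x : h.domain, h x ∈ sSup C ∧ ((x : Q) ∈ sSup C → h x = x)} with hEdef
  have h₀mem : (⟨sSup C, (sSup C).subtype⟩ : Q →ₗ.[R] Q) ∈ E :=
    ⟨le_rfl, fun x => ⟨x.2, fun _ => rfl⟩⟩
  obtain ⟨m, -, hmE, hmax⟩ := zorn_le_nonempty₀ E (fun c hcE hchain y₀ hy₀ => by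
    have hdir : DirectedOn (· ≤ ·) c := hchain.directedOn
    refine ⟨LinearPMap.sSup c hdir, ⟨?_, ?_⟩, fun z hz => LinearPMap.le_sSup hdir hz⟩
    · exact le_trans (hcE hy₀).1 (LinearPMap.le_sSup hdir hy₀).1
    · intro x
      have hdir' : DirectedOn (· ≤ ·) (LinearPMap.domain '' c) := by
        rintro _ ⟨f, hf, rfl⟩ _ ⟨g', hg', rfl⟩
        obtain ⟨k, hk, hfk, hgk⟩ := hdir f hf g' hg'
        exact ⟨k.domain, Set.mem_image_of_mem _ hk, hfk.1, hgk.1⟩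
      obtain ⟨_, ⟨l, hl, rfl⟩, hxl⟩ :=
        (Submodule.mem_sSup_of_directed ⟨_, Set.mem_image_of_mem _ hy₀⟩ hdir').1 x.2
      have hle : l ≤ LinearPMap.sSup c hdir := LinearPMap.le_sSup hdir hl
      have heq : l ⟨(x : Q), hxl⟩ = (LinearPMap.sSup c hdir) x := hle.2 rfl
      rw [← heq]
      exact ⟨((hcE hl).2 _).1, fun hx => ((hcE hl).2 _).2 hx⟩) _ h₀mem
  -- the maximal extension has full domain
  have hdom : m.domain = ⊤ := by
    by_contra hne_top
    obtain ⟨y, hy⟩ : ∃ y, y ∉ m.domain := by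
      by_contra h
      push_neg at h
      exact hne_top (Submodule.eq_top_iff'.2 h)
    set D' : Submodule R Q := m.domain ⊓ (R ∙ y) with hD'def
    set g₀ : ↥D' →ₗ[R] Q := m.toFun ∘ₗ Submodule.inclusion inf_le_left with hg₀def
    have hg₀ : ∀ x, g₀ x ∈ sSup C := fun x => (hmE.2 _).1
    obtain ⟨N, hN, hgN⟩ := key_lemma hQQ C hC hne hsummand y D' inf_le_right g₀ hg₀
    obtain ⟨PN, hPN⟩ := hsummand N hN
    obtain ⟨e, he⟩ := (ModInj.of_isCompl hQ hPN).out
      (Submodule.inclusion (inf_le_right : D' ≤ R ∙ y)) (Submodule.inclusion_injective _)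
      (LinearMap.codRestrict N g₀ hgN)
    set e' : ↥(R ∙ y) →ₗ[R] Q := N.subtype ∘ₗ e with he'def
    have he'N : ∀ z, e' z ∈ N := fun z => (e z).2
    set pm2 : Q →ₗ.[R] Q := ⟨R ∙ y, e'⟩ with hpm2def
    have H : ∀ (x : m.domain) (z : pm2.domain), (x : Q) = z → m x = pm2 z := by
      intro x z hxz
      have hx' : (x : Q) ∈ D' := ⟨x.2, hxz ▸ z.2⟩
      symm
      have hz : z = Submodule.inclusion (inf_le_right : D' ≤ R ∙ y) ⟨(x : Q), hx'⟩ :=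
        Subtype.ext hxz.symm
      calc pm2 z = N.subtype (e (Submodule.inclusion inf_le_right ⟨(x : Q), hx'⟩)) := by
            rw [hz]; rfl
        _ = N.subtype (LinearMap.codRestrict N g₀ hgN ⟨(x : Q), hx'⟩) := by rw [he]
        _ = g₀ ⟨(x : Q), hx'⟩ := rfl
        _ = m x := rfl
    set m' := m.sup pm2 H with hm'def
    have hmle : m ≤ m' := m.left_le_sup pm2 H
    have hm'E : m' ∈ E := by
      refine ⟨le_trans hmE.1 hmle.1, ?_⟩
      intro x
      have hx2 : (x : Q) ∈ m.domain ⊔ (R ∙ y) := by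
        have : m'.domain = m.domain ⊔ pm2.domain := LinearPMap.domain_sup m pm2 H
        exact this ▸ x.2
      obtain ⟨d, hd, z, hz, hdz⟩ := Submodule.mem_sup.1 hx2
      have happ : m' x = m ⟨d, hd⟩ + pm2 ⟨z, hz⟩ :=
        LinearPMap.sup_apply H ⟨d, hd⟩ ⟨z, hz⟩ x hdz
      constructor
      · rw [happ]
        exact Submodule.add_mem _ ((hmE.2 _).1)
          ((le_sSup hN) (he'N ⟨z, hz⟩))
      · intro hx
        have hxd : (x : Q) ∈ m.domain := hmE.1 hx
        have : m ⟨(x : Q), hxd⟩ = m' x := hmle.2 rfl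
        rw [← this]
        exact (hmE.2 ⟨(x : Q), hxd⟩).2 hx
    have : m' ≤ m := hmax hm'E hmle
    have hydom : y ∈ m'.domain := by
      have : m'.domain = m.domain ⊔ pm2.domain := LinearPMap.domain_sup m pm2 H
      rw [this]
      exact Submodule.mem_sup_right (Submodule.mem_span_singleton_self y)
    exact hy (this.1 hydom)
  -- build the projection
  set f : Q →ₗ[R] Q := m.toFun ∘ₗ (LinearEquiv.ofTop m.domain hdom).symm.toLinearMap with hfdef
  have hf_mem : ∀ x, f x ∈ sSup C := fun x => (hmE.2 _).1
  have hf_id : ∀ x ∈ sSup C, f x = x := by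
    intro x hx
    have h1 : (LinearEquiv.ofTop m.domain hdom).symm x = ⟨x, hdom.symm ▸ trivial⟩ :=
      LinearEquiv.ofTop_symm_apply m.domain x
    show m.toFun ((LinearEquiv.ofTop m.domain hdom).symm x) = x
    rw [h1]
    exact (hmE.2 ⟨x, hdom.symm ▸ trivial⟩).2 hx
  exact ⟨LinearMap.ker (LinearMap.codRestrict (sSup C) f hf_mem),
    LinearMap.isCompl_of_proj fun x => Subtype.ext (hf_id x.1 x.2)⟩

end Aux

theorem iSup_chain_summand_isCompl (R : Type u) [Ring R] (M : Type v) [AddCommGroup M]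
    [Module R M] (hM : SigmaInjective R M)
    (C : Set (Submodule R (⨁ _ : ℕ, M))) (hC : IsChain (· ≤ ·) C)
    (hsummand : ∀ N ∈ C, ∃ P, IsCompl N P) :
    ∃ P, IsCompl (sSup C) P := by
  rcases C.eq_empty_or_nonempty with rfl | hne
  · exact ⟨⊤, by rw [sSup_empty]; exact isCompl_bot_top⟩
  · exact main_aux (injQ hM) (injQQ hM) C hC hne hsummand
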